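/- Fix reals S_A>0, θ>0, λ>0, a prior variance V>0, and an integer t≥1. Then S_M*(t) := max(1/√(λθ) − 1/V, 0)·S_A·V/(1+t·S_A·V) is a global minimizer over [0,∞) of the map S_M ↦ F(t,S_M); that is, F(t,S_M) ≥ F(t,S_M*(t)) for every S_M ≥ 0. -/

import Mathlib

/-- Posterior variance update: `ν̂(V,Λ) = V/(1+V·Λ)`. -/
noncomputable def nuhat (V Lam : ℝ) : ℝ := V / (1 + V * Lam)

/-- Coordinated myopic cost `F(t,S_M)`. -/
noncomputable def Fcoord (SA th lam V : ℝ) (t : ℕ) (SM : ℝ) : ℝ :=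
  nuhat V ((t : ℝ) * SA * SM / (SA + SM)) + lam * (t : ℝ) * (1 + th * SM)

/-- Rewrite of the cost as `C + K/x + m·x` with `x = SA + A·S`, `A = 1 + t·SA·V`. -/
lemma Fcoord_eq (SA th lam V : ℝ) (hSA : 0 < SA) (hV : 0 < V) (t : ℕ)
    (S : ℝ) (hS : 0 ≤ S) :
    Fcoord SA th lam V t S =
      (lam * (t : ℝ) + V / (1 + (t : ℝ) * SA * V)
        - (lam * (t : ℝ) * th / (1 + (t : ℝ) * SA * V)) * SA)
      + (V ^ 2 * (t : ℝ) * SA ^ 2 / (1 + (t : ℝ) * SA * V)) / (SA + (1 + (t : ℝ) * SA * V) * S)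
      + (lam * (t : ℝ) * th / (1 + (t : ℝ) * SA * V)) * (SA + (1 + (t : ℝ) * SA * V) * S) := by
  have ht0 : (0:ℝ) ≤ (t : ℝ) := Nat.cast_nonneg t
  have h1 : 0 < SA + S := by linarith
  have hA : 0 < 1 + (t : ℝ) * SA * V := by positivity
  have h3 : 0 < SA + (1 + (t : ℝ) * SA * V) * S :=
    add_pos_of_pos_of_nonneg hSA (mul_nonneg hA.le hS)
  have h4 : 0 < 1 + V * ((t : ℝ) * SA * S / (SA + S)) := by positivity
  unfold Fcoord nuhat
  field_simp
  ring

/-- AM–GM style key lemma (interior case): if `K = m·y²` then `K/y + m·y` minimizes. -/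
lemma aux1 (K m x y : ℝ) (hx : 0 < x) (hy : 0 < y) (hm : 0 ≤ m) (hK : K = m * y ^ 2) :
    K / y + m * y ≤ K / x + m * x := by
  rw [div_add' _ _ _ hy.ne', div_add' _ _ _ hx.ne', div_le_div_iff₀ hy hx]
  nlinarith [mul_nonneg hm (mul_nonneg hy.le (sq_nonneg (x - y)))]

/-- Boundary case: if `K ≤ m·y²` and `y ≤ x` then `K/y + m·y ≤ K/x + m·x`. -/
lemma aux2 (K m x y : ℝ) (hx : 0 < x) (hy : 0 < y) (hm : 0 ≤ m)
    (hK : K ≤ m * y ^ 2) (hxy : y ≤ x) :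
    K / y + m * y ≤ K / x + m * x := by
  have hK' : K ≤ m * (x * y) := by nlinarith [mul_nonneg hm (mul_nonneg hy.le (sub_nonneg.2 hxy))]
  rw [div_add' _ _ _ hy.ne', div_add' _ _ _ hx.ne', div_le_div_iff₀ hy hx]
  nlinarith [mul_nonneg (sub_nonneg.2 hxy) (sub_nonneg.2 hK')]

/-- for fixed `t ≥ 1`, the closed-form
`S_M*(t) = max(1/√(λθ) − 1/V, 0)·S_A·V/(1+t·S_A·V)` globally minimizes
`S_M ↦ F(t,S_M)` over `[0,∞)`. -/
theorem stmt_0 (SA th lam V : ℝ) (hSA : 0 < SA) (hth : 0 < th) (hlam : 0 < lam)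
    (hV : 0 < V) (t : ℕ) (ht : 1 ≤ t)
    (SMstar : ℝ)
    (hstar : SMstar = max (1 / Real.sqrt (lam * th) - 1 / V) 0 * SA * V / (1 + (t : ℝ) * SA * V)) :
    ∀ SM : ℝ, 0 ≤ SM → Fcoord SA th lam V t SM ≥ Fcoord SA th lam V t SMstar := by
  intro SM hSM
  have ht0 : (0:ℝ) ≤ (t : ℝ) := Nat.cast_nonneg t
  set s : ℝ := Real.sqrt (lam * th) with hs_def
  have hlt : 0 < lam * th := mul_pos hlam hth
  have hs0 : 0 < s := Real.sqrt_pos.2 hlt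
  have hs2 : s ^ 2 = lam * th := Real.sq_sqrt hlt.le
  have hA : 0 < 1 + (t : ℝ) * SA * V := by positivity
  have hSMstar0 : 0 ≤ SMstar := by
    rw [hstar]
    exact div_nonneg (mul_nonneg (mul_nonneg (le_max_right _ 0) hSA.le) hV.le) hA.le
  have hx : 0 < SA + (1 + (t : ℝ) * SA * V) * SM :=
    add_pos_of_pos_of_nonneg hSA (mul_nonneg hA.le hSM)
  have hy : 0 < SA + (1 + (t : ℝ) * SA * V) * SMstar :=
    add_pos_of_pos_of_nonneg hSA (mul_nonneg hA.le hSMstar0)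
  have hm : 0 ≤ lam * (t : ℝ) * th / (1 + (t : ℝ) * SA * V) := by positivity
  rw [ge_iff_le, Fcoord_eq SA th lam V hSA hV t SMstar hSMstar0,
      Fcoord_eq SA th lam V hSA hV t SM hSM]
  have main :
      (V ^ 2 * (t : ℝ) * SA ^ 2 / (1 + (t : ℝ) * SA * V)) / (SA + (1 + (t : ℝ) * SA * V) * SMstar)
        + (lam * (t : ℝ) * th / (1 + (t : ℝ) * SA * V)) * (SA + (1 + (t : ℝ) * SA * V) * SMstar)
      ≤ (V ^ 2 * (t : ℝ) * SA ^ 2 / (1 + (t : ℝ) * SA * V)) / (SA + (1 + (t : ℝ) * SA * V) * SM)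
        + (lam * (t : ℝ) * th / (1 + (t : ℝ) * SA * V)) * (SA + (1 + (t : ℝ) * SA * V) * SM) := by
    rcases le_or_gt (1 / s - 1 / V) 0 with hcase | hcase
    · -- boundary case: SMstar = 0
      have hmax : max (1 / s - 1 / V) 0 = 0 := max_eq_right hcase
      have hstar0 : SMstar = 0 := by rw [hstar, hmax]; ring
      have hVs : V ≤ s := by
        have h1s : 1 / s ≤ 1 / V := by linarith
        rw [div_le_div_iff₀ hs0 hV] at h1s
        linarith
      have hV2 : V ^ 2 ≤ lam * th := by nlinarith
      have hKle : V ^ 2 * (t : ℝ) * SA ^ 2 / (1 + (t : ℝ) * SA * V)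
          ≤ (lam * (t : ℝ) * th / (1 + (t : ℝ) * SA * V)) * (SA + (1 + (t : ℝ) * SA * V) * SMstar) ^ 2 := by
        rw [hstar0, div_mul_eq_mul_div, div_le_div_iff₀ hA hA]
        nlinarith [mul_nonneg (mul_nonneg (mul_nonneg ht0 (sq_nonneg SA)) hA.le)
          (sub_nonneg.2 hV2), sq_nonneg SA, mul_pos hA hA]
      have hxy : SA + (1 + (t : ℝ) * SA * V) * SMstar ≤ SA + (1 + (t : ℝ) * SA * V) * SM := by
        rw [hstar0]
        nlinarith [mul_nonneg hA.le hSM]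
      exact aux2 _ _ _ _ hx hy hm hKle hxy
    · -- interior case
      have hmax : max (1 / s - 1 / V) 0 = 1 / s - 1 / V := max_eq_left hcase.le
      have hy_eq : SA + (1 + (t : ℝ) * SA * V) * SMstar = V * SA / s := by
        rw [hstar, hmax]
        field_simp
        ring
      have hKeq : V ^ 2 * (t : ℝ) * SA ^ 2 / (1 + (t : ℝ) * SA * V)
          = (lam * (t : ℝ) * th / (1 + (t : ℝ) * SA * V)) * (V * SA / s) ^ 2 := by
        rw [div_mul_eq_mul_div, div_eq_div_iff hA.ne' hA.ne']
        have : lam * th = s ^ 2 := hs2.symm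
        field_simp
        linear_combination hs2
      rw [hy_eq]
      exact aux1 _ _ _ _ hx (by positivity) hm hKeq
  linarith
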